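/- Every vertex of K is attained by a leader: if v is an extreme point of K, then there exist a token index i and a time k ∈ ℕ such that C_i^k = {i} (so z_i is a leader) and v = z_i^k. -/

import Mathlib

open scoped RealInnerProductSpace BigOperators Classical
open Filter Metric

noncomputable section

/-- The hardmax attention (argmax) index set `C_i` for a token configuration `z`
(attention matrix `A = I`): the set of indices `j` maximizing `⟪z_i, z_j⟫`. -/
def attn {d n : ℕ} (z : Fin n → EuclideanSpace ℝ (Fin d)) (i : Fin n) : Finset (Fin n) :=
  Finset.univ.filter fun j => (⟪z i, z j⟫ = ⨆ ℓ, ⟪z i, z ℓ⟫)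

/-- The pure-attention hardmax transformer dynamics with step-size `α > 0` and `A = I`:
`z_i^{k+1} = z_i^k + (α/(1+α))·(1/|C_i^k|)·Σ_{j ∈ C_i^k} (z_j^k − z_i^k)`. -/
def IsDyn {d n : ℕ} (α : ℝ) (z : ℕ → Fin n → EuclideanSpace ℝ (Fin d)) : Prop :=
  ∀ k i, z (k + 1) i = z k i +
    (α / (1 + α)) • (((attn (z k) i).card : ℝ)⁻¹ • ∑ j ∈ attn (z k) i, (z k j - z k i))

/-- The limiting set `K = ⋂ₖ co(Z^k)`, the intersection of the convex hulls of the token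
configurations over all times. -/
def limitK {d n : ℕ} (z : ℕ → Fin n → EuclideanSpace ℝ (Fin d)) :
    Set (EuclideanSpace ℝ (Fin d)) :=
  ⋂ k, convexHull ℝ (Set.range (z k))

/-- The barycenter of the attended tokens. -/
def bary {d n : ℕ} (x : Fin n → EuclideanSpace ℝ (Fin d)) (i : Fin n) :
    EuclideanSpace ℝ (Fin d) :=
  ((attn x i).card : ℝ)⁻¹ • ∑ j ∈ attn x i, x j

section Basic

variable {d n : ℕ}

lemma bdd_inner (x : Fin n → EuclideanSpace ℝ (Fin d)) (i : Fin n) :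
    BddAbove (Set.range fun ℓ => ⟪x i, x ℓ⟫) :=
  (Set.finite_range _).bddAbove

lemma inner_le_iSup (x : Fin n → EuclideanSpace ℝ (Fin d)) (i j : Fin n) :
    ⟪x i, x j⟫ ≤ ⨆ ℓ, ⟪x i, x ℓ⟫ :=
  le_ciSup (bdd_inner x i) j

lemma mem_attn_iff {x : Fin n → EuclideanSpace ℝ (Fin d)} {i j : Fin n} :
    j ∈ attn x i ↔ ⟪x i, x j⟫ = ⨆ ℓ, ⟪x i, x ℓ⟫ := by
  simp [attn]

lemma attn_nonempty (hn : 0 < n) (x : Fin n → EuclideanSpace ℝ (Fin d)) (i : Fin n) :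
    (attn x i).Nonempty := by
  have : Nonempty (Fin n) := ⟨⟨0, hn⟩⟩
  obtain ⟨j, hj⟩ := Finite.exists_max fun ℓ => ⟪x i, x ℓ⟫
  exact ⟨j, mem_attn_iff.2 (le_antisymm (inner_le_iSup x i j) (ciSup_le hj))⟩

lemma attn_card_pos (hn : 0 < n) (x : Fin n → EuclideanSpace ℝ (Fin d)) (i : Fin n) :
    (0:ℝ) < ((attn x i).card : ℝ) := by
  exact_mod_cast Finset.card_pos.2 (attn_nonempty hn x i)

lemma inv_card_smul_sum_sub (hn : 0 < n) (x : Fin n → EuclideanSpace ℝ (Fin d)) (i : Fin n) :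
    ((attn x i).card : ℝ)⁻¹ • ∑ j ∈ attn x i, (x j - x i) = bary x i - x i := by
  have hc : ((attn x i).card : ℝ) ≠ 0 := ne_of_gt (attn_card_pos hn x i)
  rw [Finset.sum_sub_distrib, Finset.sum_const, smul_sub, bary]
  congr 1
  rw [← Nat.cast_smul_eq_nsmul ℝ, smul_smul, inv_mul_cancel₀ hc, one_smul]

lemma step_eq {α : ℝ} {z : ℕ → Fin n → EuclideanSpace ℝ (Fin d)} (hdyn : IsDyn α z)
    (hn : 0 < n) (k : ℕ) (i : Fin n) :
    z (k+1) i = z k i + (α / (1 + α)) • (bary (z k) i - z k i) := by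
  rw [hdyn k i, inv_card_smul_sum_sub hn]

lemma inner_bary_self (hn : 0 < n) (x : Fin n → EuclideanSpace ℝ (Fin d)) (i : Fin n) :
    ⟪x i, bary x i⟫ = ⨆ ℓ, ⟪x i, x ℓ⟫ := by
  have hc : ((attn x i).card : ℝ) ≠ 0 := ne_of_gt (attn_card_pos hn x i)
  rw [bary, real_inner_smul_right, inner_sum]
  rw [Finset.sum_congr rfl (fun j hj => mem_attn_iff.1 hj), Finset.sum_const,
    nsmul_eq_mul, ← mul_assoc, inv_mul_cancel₀ hc, one_mul]

lemma inner_bary_le (hn : 0 < n) (x : Fin n → EuclideanSpace ℝ (Fin d)) (i w : Fin n) :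
    ⟪x w, bary x i⟫ ≤ ⨆ ℓ, ⟪x w, x ℓ⟫ := by
  have hc : (0:ℝ) < ((attn x i).card : ℝ) := attn_card_pos hn x i
  rw [bary, real_inner_smul_right, inner_sum]
  rw [inv_mul_le_iff₀ hc]
  calc ∑ j ∈ attn x i, ⟪x w, x j⟫ ≤ ∑ j ∈ attn x i, ⨆ ℓ, ⟪x w, x ℓ⟫ :=
        Finset.sum_le_sum fun j _ => inner_le_iSup x w j
    _ = ((attn x i).card : ℝ) * ⨆ ℓ, ⟪x w, x ℓ⟫ := by
        rw [Finset.sum_const, nsmul_eq_mul]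

lemma bary_mem_convexHull (hn : 0 < n) (x : Fin n → EuclideanSpace ℝ (Fin d)) (i : Fin n) :
    bary x i ∈ convexHull ℝ (Set.range x) := by
  have hc : (0:ℝ) < ((attn x i).card : ℝ) := attn_card_pos hn x i
  rw [bary, Finset.smul_sum]
  refine (convex_convexHull ℝ _).sum_mem (fun j _ => by positivity) ?_
    (fun j _ => subset_convexHull ℝ _ (Set.mem_range_self j))
  rw [Finset.sum_const, nsmul_eq_mul, mul_inv_cancel₀ (ne_of_gt hc)]

end Basic

section Traj

variable {d n : ℕ} {α : ℝ} {z : ℕ → Fin n → EuclideanSpace ℝ (Fin d)}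

lemma theta_pos (hα : 0 < α) : 0 < α / (1 + α) := by positivity

lemma theta_lt_one (hα : 0 < α) : α / (1 + α) < 1 := by
  rw [div_lt_one (by linarith)]; linarith

lemma range_step_subset (hdyn : IsDyn α z) (hα : 0 < α) (hn : 0 < n) (k : ℕ) :
    Set.range (z (k+1)) ⊆ convexHull ℝ (Set.range (z k)) := by
  rintro - ⟨i, rfl⟩
  rw [step_eq hdyn hn]
  exact (convex_convexHull ℝ _).add_smul_sub_mem
    (subset_convexHull ℝ _ (Set.mem_range_self i)) (bary_mem_convexHull hn (z k) i)
    ⟨le_of_lt (theta_pos hα), le_of_lt (theta_lt_one hα)⟩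

lemma hull_anti (hdyn : IsDyn α z) (hα : 0 < α) (hn : 0 < n) {k l : ℕ} (hkl : k ≤ l) :
    convexHull ℝ (Set.range (z l)) ⊆ convexHull ℝ (Set.range (z k)) := by
  induction l with
  | zero => simpa [Nat.le_zero.1 hkl] using subset_rfl
  | succ m ih =>
    rcases Nat.lt_or_ge k (m+1) with h | h
    · exact (convexHull_min (range_step_subset hdyn hα hn m)
        (convex_convexHull ℝ _)).trans (ih (Nat.lt_succ_iff.1 h))
    · have : k = m + 1 := le_antisymm hkl h
      subst this; exact subset_rfl

lemma token_mem_hull (hdyn : IsDyn α z) (hα : 0 < α) (hn : 0 < n) {k l : ℕ} (hkl : k ≤ l)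
    (i : Fin n) : z l i ∈ convexHull ℝ (Set.range (z k)) :=
  hull_anti hdyn hα hn hkl (subset_convexHull ℝ _ (Set.mem_range_self i))

lemma exists_bound (hdyn : IsDyn α z) (hα : 0 < α) (hn : 0 < n) :
    ∃ R : ℝ, 0 ≤ R ∧ ∀ k i, ‖z k i‖ ≤ R := by
  have hcpt : IsCompact (convexHull ℝ (Set.range (z 0))) :=
    (Set.finite_range (z 0)).isCompact_convexHull ℝ
  obtain ⟨R, hR⟩ := hcpt.isBounded.subset_closedBall 0
  refine ⟨max R 0, le_max_right _ _, fun k i => ?_⟩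
  have := hR (token_mem_hull hdyn hα hn (Nat.zero_le k) i)
  rw [mem_closedBall, dist_zero_right] at this
  exact this.trans (le_max_left _ _)

lemma norm_sq_step (hdyn : IsDyn α z) (hα : 0 < α) (hn : 0 < n) (k : ℕ) (i : Fin n) :
    ‖z k i‖^2 + (α / (1 + α))^2 * ‖bary (z k) i - z k i‖^2 ≤ ‖z (k+1) i‖^2 := by
  set θ := α / (1 + α) with hθ
  have hθ0 : 0 < θ := theta_pos hα
  rw [step_eq hdyn hn, norm_add_sq_real]
  have h1 : ⟪z k i, θ • (bary (z k) i - z k i)⟫ = θ * (⟪z k i, bary (z k) i⟫ - ‖z k i‖^2) := by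
    rw [real_inner_smul_right, inner_sub_right, real_inner_self_eq_norm_sq]
  have h2 : (0:ℝ) ≤ ⟪z k i, bary (z k) i⟫ - ‖z k i‖^2 := by
    rw [inner_bary_self hn]
    have := inner_le_iSup (z k) i i
    rw [real_inner_self_eq_norm_sq] at this
    linarith
  have h3 : ‖θ • (bary (z k) i - z k i)‖^2 = θ^2 * ‖bary (z k) i - z k i‖^2 := by
    rw [norm_smul, Real.norm_eq_abs, abs_of_pos hθ0, mul_pow]
  rw [h1, h3]
  nlinarith [mul_nonneg (le_of_lt hθ0) h2]

lemma norm_mono (hdyn : IsDyn α z) (hα : 0 < α) (hn : 0 < n) {k l : ℕ} (hkl : k ≤ l)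
    (i : Fin n) : ‖z k i‖ ≤ ‖z l i‖ := by
  induction l with
  | zero => simp [Nat.le_zero.1 hkl]
  | succ m ih =>
    have hstep : ‖z m i‖ ≤ ‖z (m+1) i‖ := by
      have := norm_sq_step hdyn hα hn m i
      nlinarith [norm_nonneg (z m i), norm_nonneg (z (m+1) i),
        sq_nonneg (α / (1 + α)) , sq_nonneg ‖bary (z m) i - z m i‖,
        mul_nonneg (sq_nonneg (α / (1 + α))) (sq_nonneg ‖bary (z m) i - z m i‖)]
    rcases Nat.lt_or_ge k (m+1) with h | h
    · exact (ih (Nat.lt_succ_iff.1 h)).trans hstep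
    · have : k = m + 1 := le_antisymm hkl h
      subst this; exact le_rfl

lemma steps_tendsto_zero (hdyn : IsDyn α z) (hα : 0 < α) (hn : 0 < n) (i : Fin n) :
    Tendsto (fun k => bary (z k) i - z k i) atTop (nhds 0) := by
  obtain ⟨R, hR0, hR⟩ := exists_bound hdyn hα hn
  set θ := α / (1 + α) with hθ
  have hθ0 : 0 < θ := theta_pos hα
  have hsum : Summable (fun k => θ^2 * ‖bary (z k) i - z k i‖^2) := by
    refine summable_of_sum_range_le (c := R^2 + ‖z 0 i‖^2) (fun k => by positivity) (fun m => ?_)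
    have htel : ∑ k ∈ Finset.range m, (‖z (k+1) i‖^2 - ‖z k i‖^2) = ‖z m i‖^2 - ‖z 0 i‖^2 :=
      Finset.sum_range_sub (fun k => ‖z k i‖^2) m
    have hle : ∑ k ∈ Finset.range m, θ^2 * ‖bary (z k) i - z k i‖^2
        ≤ ∑ k ∈ Finset.range m, (‖z (k+1) i‖^2 - ‖z k i‖^2) := by
      refine Finset.sum_le_sum fun k _ => ?_
      have := norm_sq_step hdyn hα hn k i
      linarith
    have hm : ‖z m i‖ ≤ R := hR m i
    have : ‖z m i‖^2 ≤ R^2 := by nlinarith [norm_nonneg (z m i)]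
    nlinarith [sq_nonneg ‖z 0 i‖]
  have h1 : Tendsto (fun k => θ^2 * ‖bary (z k) i - z k i‖^2) atTop (nhds 0) :=
    hsum.tendsto_atTop_zero
  have h2 : Tendsto (fun k => ‖bary (z k) i - z k i‖^2) atTop (nhds 0) := by
    have h := h1.const_mul (θ^2)⁻¹
    rw [mul_zero] at h
    refine h.congr fun k => ?_
    rw [← mul_assoc, inv_mul_cancel₀ (ne_of_gt (pow_pos hθ0 2)), one_mul]
  have h3 : Tendsto (fun k => ‖bary (z k) i - z k i‖) atTop (nhds 0) := by
    have hsqrt := (Real.continuous_sqrt.tendsto 0).comp h2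
    rw [Real.sqrt_zero] at hsqrt
    refine hsqrt.congr fun k => ?_
    simp [Real.sqrt_sq (norm_nonneg _)]
  exact tendsto_zero_iff_norm_tendsto_zero.2 h3

end Traj

section Inj

variable {d n : ℕ} {α : ℝ} {z : ℕ → Fin n → EuclideanSpace ℝ (Fin d)}

lemma inj_step (hdyn : IsDyn α z) (hα : 0 < α) (hn : 0 < n) (k : ℕ)
    (hinj : Function.Injective (z k)) : Function.Injective (z (k+1)) := by
  set θ := α / (1 + α) with hθdef
  have hθ0 : 0 < θ := theta_pos hα
  have hθ1 : θ < 1 := theta_lt_one hα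
  intro i j hij
  by_contra hne
  have hzne : z k i ≠ z k j := fun h => hne (hinj h)
  set x := z k with hx
  set u := x i - x j with hu
  have hu0 : u ≠ 0 := sub_ne_zero.2 hzne
  have heq : (1 - θ) • u = θ • (bary x j - bary x i) := by
    have h1 := step_eq hdyn hn k i
    have h2 := step_eq hdyn hn k j
    rw [h1, h2] at hij
    rw [← hθdef] at hij
    rw [hu, hx]
    linear_combination (norm := module) hij
  have hkey : (1 - θ) * ⟪u, u⟫ ≤ 0 := by
    have hib : ⟪x i, bary x i⟫ = ⨆ ℓ, ⟪x i, x ℓ⟫ := inner_bary_self hn x i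
    have hjb : ⟪x j, bary x j⟫ = ⨆ ℓ, ⟪x j, x ℓ⟫ := inner_bary_self hn x j
    have hib' : ⟪x i, bary x j⟫ ≤ ⨆ ℓ, ⟪x i, x ℓ⟫ := inner_bary_le hn x j i
    have hjb' : ⟪x j, bary x i⟫ ≤ ⨆ ℓ, ⟪x j, x ℓ⟫ := inner_bary_le hn x i j
    have : ⟪u, (1 - θ) • u⟫ = ⟪u, θ • (bary x j - bary x i)⟫ := by rw [heq]
    rw [real_inner_smul_right, real_inner_smul_right] at this
    have hexp : ⟪u, bary x j - bary x i⟫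
        = (⟪x i, bary x j⟫ - ⟪x j, bary x j⟫) + (⟪x j, bary x i⟫ - ⟪x i, bary x i⟫) := by
      rw [hu, inner_sub_left, inner_sub_right, inner_sub_right]; ring
    have hle : ⟪u, bary x j - bary x i⟫ ≤ 0 := by
      rw [hexp, hib, hjb]; linarith
    rw [this]
    exact mul_nonpos_of_nonneg_of_nonpos (le_of_lt hθ0) hle |>.trans_eq' rfl
  have hpos : 0 < ⟪u, u⟫ := by
    rw [real_inner_self_eq_norm_sq]
    have : 0 < ‖u‖ := norm_pos_iff.2 hu0
    positivity
  nlinarith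

lemma inj_all (hdyn : IsDyn α z) (hα : 0 < α) (hn : 0 < n)
    (hdist : ∀ i j : Fin n, i ≠ j → z 0 i ≠ z 0 j) (k : ℕ) :
    Function.Injective (z k) := by
  induction k with
  | zero => intro i j h; by_contra hne; exact hdist i j hne h
  | succ m ih => exact inj_step hdyn hα hn m ih

end Inj

section Freeze

variable {d n : ℕ} {α : ℝ} {z : ℕ → Fin n → EuclideanSpace ℝ (Fin d)}

lemma sup_eq_norm_sq (hn : 0 < n) {y : Fin n → EuclideanSpace ℝ (Fin d)} {i : Fin n}
    {x : EuclideanSpace ℝ (Fin d)} (hyi : y i = x)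
    (hlt : ∀ j, j ≠ i → ⟪x, y j⟫ < ‖x‖^2) : (⨆ ℓ, ⟪y i, y ℓ⟫) = ‖x‖^2 := by
  have : Nonempty (Fin n) := ⟨⟨0, hn⟩⟩
  refine le_antisymm (ciSup_le fun ℓ => ?_) ?_
  · rcases eq_or_ne ℓ i with rfl | hne
    · rw [hyi, real_inner_self_eq_norm_sq]
    · rw [hyi]; exact le_of_lt (hlt ℓ hne)
  · calc ‖x‖^2 = ⟪y i, y i⟫ := by rw [hyi, real_inner_self_eq_norm_sq]
      _ ≤ ⨆ ℓ, ⟪y i, y ℓ⟫ := inner_le_iSup y i i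

lemma attn_eq_singleton (hn : 0 < n) {y : Fin n → EuclideanSpace ℝ (Fin d)} {i : Fin n}
    {x : EuclideanSpace ℝ (Fin d)} (hyi : y i = x)
    (hlt : ∀ j, j ≠ i → ⟪x, y j⟫ < ‖x‖^2) : attn y i = {i} := by
  have hsup := sup_eq_norm_sq hn hyi hlt
  ext j
  rw [mem_attn_iff, Finset.mem_singleton, hsup]
  constructor
  · intro hj
    by_contra hne
    rw [hyi] at hj
    exact absurd hj (ne_of_lt (hlt j hne))
  · rintro rfl
    rw [hyi, real_inner_self_eq_norm_sq]

lemma bary_of_attn_singleton {y : Fin n → EuclideanSpace ℝ (Fin d)} {i : Fin n}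
    (h : attn y i = {i}) : bary y i = y i := by
  rw [bary, h, Finset.sum_singleton, Finset.card_singleton]
  norm_num

lemma freeze (hdyn : IsDyn α z) (hα : 0 < α) (hn : 0 < n) {k : ℕ} {i : Fin n}
    (hat : attn (z k) i = {i}) :
    ∀ m, z (k+m) i = z k i ∧ attn (z (k+m)) i = {i} := by
  set θ := α / (1 + α) with hθdef
  have hθ0 : 0 < θ := theta_pos hα
  have hθ1 : θ < 1 := theta_lt_one hα
  set x := z k i with hx
  have hsup0 : (⨆ ℓ, ⟪z k i, z k ℓ⟫) = ‖x‖^2 := by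
    have hi : i ∈ attn (z k) i := by rw [hat]; exact Finset.mem_singleton_self i
    rw [mem_attn_iff] at hi
    rw [← hi, real_inner_self_eq_norm_sq]
  have hQ : ∀ m, z (k+m) i = x ∧ ∀ j, j ≠ i → ⟪x, z (k+m) j⟫ < ‖x‖^2 := by
    intro m
    induction m with
    | zero =>
      refine ⟨rfl, fun j hj => ?_⟩
      have hj' : j ∉ attn (z k) i := by rw [hat]; simpa using hj
      rw [mem_attn_iff] at hj'
      have hle := inner_le_iSup (z k) i j
      rw [hsup0] at hle hj'
      exact lt_of_le_of_ne hle hj'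
    | succ m ih =>
      obtain ⟨hzi, hlt⟩ := ih
      have hat' : attn (z (k+m)) i = {i} := attn_eq_singleton hn hzi hlt
      have hsup' : (⨆ ℓ, ⟪z (k+m) i, z (k+m) ℓ⟫) = ‖x‖^2 := sup_eq_norm_sq hn hzi hlt
      have hzi' : z (k+m+1) i = x := by
        rw [step_eq hdyn hn,
          bary_of_attn_singleton hat', sub_self, smul_zero, add_zero, hzi]
      refine ⟨hzi', fun j hj => ?_⟩
      show ⟪x, z (k + m + 1) j⟫ < ‖x‖^2
      have hble : ⟪x, bary (z (k+m)) j⟫ ≤ ‖x‖^2 := by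
        have := inner_bary_le hn (z (k+m)) j i
        rw [hsup'] at this
        rw [hzi] at this
        exact this
      have hzj : ⟪x, z (k+m) j⟫ < ‖x‖^2 := hlt j hj
      rw [step_eq hdyn hn, ← hθdef]
      rw [inner_add_right, real_inner_smul_right, inner_sub_right]
      nlinarith
  intro m
  obtain ⟨h1, h2⟩ := hQ m
  exact ⟨h1, attn_eq_singleton hn h1 h2⟩

end Freeze

section Extreme

variable {E' : Type*} [NormedAddCommGroup E'] [NormedSpace ℝ E']

lemma extremePoint_of_combo {K : Set E'} (hK : Convex ℝ K) {v : E'}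
    (hv : v ∈ Set.extremePoints ℝ K) {ι : Type*} (s : Finset ι) :
    ∀ (a : ι → ℝ) (p : ι → E'), (∀ i ∈ s, 0 ≤ a i) → (∑ i ∈ s, a i) = 1 →
      (∀ i ∈ s, p i ∈ K) → (∑ i ∈ s, a i • p i) = v →
      ∀ i ∈ s, a i ≠ 0 → p i = v := by
  classical
  induction s using Finset.induction_on with
  | empty => intro a p _ hsum _ _ i hi; exact absurd hi (Finset.notMem_empty i)
  | @insert i₀ t hi₀ ih =>
    intro a p ha hsum hp heq j hj hja
    rw [Finset.sum_insert hi₀] at hsum heq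
    have ha0 : 0 ≤ a i₀ := ha i₀ (Finset.mem_insert_self _ _)
    have htnonneg : ∀ i ∈ t, 0 ≤ a i := fun i hi => ha i (Finset.mem_insert_of_mem hi)
    have htpK : ∀ i ∈ t, p i ∈ K := fun i hi => hp i (Finset.mem_insert_of_mem hi)
    rcases eq_or_lt_of_le ha0 with hA0 | hA0
    · -- a i₀ = 0
      have hsum' : (∑ i ∈ t, a i) = 1 := by rw [← hA0, zero_add] at hsum; exact hsum
      have heq' : (∑ i ∈ t, a i • p i) = v := by rw [← hA0, zero_smul, zero_add] at heq; exact heq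
      rcases Finset.mem_insert.1 hj with rfl | hjt
      · exact absurd hA0.symm hja
      · exact ih a p htnonneg hsum' htpK heq' j hjt hja
    · have htsum0 : 0 ≤ ∑ i ∈ t, a i := Finset.sum_nonneg htnonneg
      rcases lt_or_eq_of_le (show a i₀ ≤ 1 by linarith) with hA1 | hA1
      · -- 0 < a i₀ < 1
        have h1A : 0 < 1 - a i₀ := by linarith
        set w : ι → ℝ := fun i => (1 - a i₀)⁻¹ * a i with hw
        have hwnonneg : ∀ i ∈ t, 0 ≤ w i := fun i hi =>
          mul_nonneg (le_of_lt (inv_pos.2 h1A)) (htnonneg i hi)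
        have hwsum : (∑ i ∈ t, w i) = 1 := by
          rw [hw, ← Finset.mul_sum]
          field_simp
          linarith
        set q : E' := ∑ i ∈ t, w i • p i with hq
        have hqK : q ∈ K := hK.sum_mem hwnonneg hwsum htpK
        have hseg : v ∈ openSegment ℝ (p i₀) q := by
          refine ⟨a i₀, 1 - a i₀, hA0, h1A, by ring, ?_⟩
          rw [hq, Finset.smul_sum, ← heq]
          congr 1
          refine Finset.sum_congr rfl fun i hi => ?_
          rw [hw, smul_smul, ← mul_assoc, mul_inv_cancel₀ (ne_of_gt h1A), one_mul]
        obtain ⟨hp0, hqv⟩ := (mem_extremePoints.1 hv).2 _ (hp i₀ (Finset.mem_insert_self _ _)) _ hqK hseg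
        rcases Finset.mem_insert.1 hj with rfl | hjt
        · exact hp0
        · refine ih w p hwnonneg hwsum htpK hqv j hjt ?_
          exact fun h => hja (by
            have := mul_eq_zero.1 h
            rcases this with h' | h'
            · exact absurd h' (ne_of_gt (inv_pos.2 h1A))
            · exact h')
      · -- a i₀ = 1
        have htzero : ∀ i ∈ t, a i = 0 := by
          intro i hi
          have : (∑ i ∈ t, a i) = 0 := by linarith
          exact (Finset.sum_eq_zero_iff_of_nonneg htnonneg).1 this i hi
        have : (∑ i ∈ t, a i • p i) = 0 :=
          Finset.sum_eq_zero fun i hi => by rw [htzero i hi, zero_smul]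
        have hp0 : p i₀ = v := by
          rw [this, add_zero, hA1, one_smul] at heq; exact heq
        rcases Finset.mem_insert.1 hj with rfl | hjt
        · exact hp0
        · exact absurd (htzero j hjt) hja

end Extreme

section Extract

variable {d n : ℕ} {α : ℝ} {z : ℕ → Fin n → EuclideanSpace ℝ (Fin d)}

lemma exists_subseq (hdyn : IsDyn α z) (hα : 0 < α) (hn : 0 < n) :
    ∃ φ : ℕ → ℕ, StrictMono φ ∧
      ∃ w : Fin n → EuclideanSpace ℝ (Fin d),
        (∀ j, Tendsto (fun m => z (φ m) j) atTop (nhds (w j))) ∧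
        ∃ Cs : Fin n → Finset (Fin n), ∀ m i, attn (z (φ m)) i = Cs i := by
  obtain ⟨R, hR0, hR⟩ := exists_bound hdyn hα hn
  -- step 1 : convergent subsequence in the product space
  have hmem : ∀ k, z k ∈ closedBall (0 : Fin n → EuclideanSpace ℝ (Fin d)) R := by
    intro k
    rw [mem_closedBall, dist_pi_le_iff hR0]
    intro i
    show dist (z k i) 0 ≤ R
    rw [dist_zero_right]
    exact hR k i
  obtain ⟨w, -, φ₀, hφ₀, hconv⟩ :=
    tendsto_subseq_of_bounded isBounded_closedBall hmem
  have hconv' : ∀ j, Tendsto (fun m => z (φ₀ m) j) atTop (nhds (w j)) := by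
    intro j
    exact (tendsto_pi_nhds.1 hconv) j
  -- step 2 : constant attention profile along a further subsequence
  set P : ℕ → (Fin n → Finset (Fin n)) := fun m i => attn (z (φ₀ m)) i with hP
  have hfreq : ∃ c, ∃ᶠ m in atTop, P m = c := by
    by_contra hc
    push_neg at hc
    have hev : ∀ c, ∀ᶠ m in atTop, P m ≠ c := by
      intro c
      have := hc c
      exact this
    have : ∀ᶠ m in atTop, ∀ c, P m ≠ c := Filter.eventually_all.2 hev
    obtain ⟨m, hm⟩ := this.exists
    exact hm (P m) rfl
  obtain ⟨c, hc⟩ := hfreq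
  obtain ⟨ψ, hψ, hcψ⟩ := extraction_of_frequently_atTop hc
  refine ⟨φ₀ ∘ ψ, hφ₀.comp hψ, w, ?_, c, ?_⟩
  · intro j
    exact (hconv' j).comp hψ.tendsto_atTop
  · intro m i
    have := hcψ m
    rw [hP] at this
    exact congrFun this i

end Extract

section Repr

variable {d n : ℕ}

lemma exists_weights {y : Fin n → EuclideanSpace ℝ (Fin d)} (hy : Function.Injective y)
    {v : EuclideanSpace ℝ (Fin d)} (hv : v ∈ convexHull ℝ (Set.range y)) :
    ∃ a : Fin n → ℝ, (∀ i, 0 ≤ a i) ∧ (∑ i, a i) = 1 ∧ (∑ i, a i • y i) = v := by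
  classical
  have hrange : Set.range y = ↑(Finset.univ.image y) := by
    simp [Finset.coe_image]
  rw [hrange, Finset.convexHull_eq] at hv
  obtain ⟨w, hw0, hw1, hwc⟩ := hv
  have hinj : ∀ x ∈ Finset.univ, ∀ x' ∈ Finset.univ, y x = y x' → x = x' :=
    fun x _ x' _ h => hy h
  refine ⟨fun i => w (y i), fun i => hw0 (y i) (Finset.mem_image_of_mem y (Finset.mem_univ i)),
    ?_, ?_⟩
  · rw [← Finset.sum_image (g := y) (s := Finset.univ) (f := w) hinj]
    exact hw1
  · have hcm : (Finset.univ.image y).centerMass w id = ∑ p ∈ Finset.univ.image y, w p • p := by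
      rw [Finset.centerMass_eq_of_sum_1 _ id hw1]
      rfl
    rw [hcm] at hwc
    rw [← hwc]
    exact (Finset.sum_image (g := y) (s := Finset.univ) (f := fun p => w p • p) hinj).symm

end Repr

/-- Every vertex (extreme point) of `K` is attained by a leader. -/
theorem vertex_attained_by_leader {d n : ℕ} (hd : 0 < d) (hn : 0 < n) (α : ℝ) (hα : 0 < α)
    (z : ℕ → Fin n → EuclideanSpace ℝ (Fin d)) (hdyn : IsDyn α z)
    (hdist : ∀ i j : Fin n, i ≠ j → z 0 i ≠ z 0 j) (hnz : ∀ i, z 0 i ≠ 0)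
    (v : EuclideanSpace ℝ (Fin d)) (hv : v ∈ Set.extremePoints ℝ (limitK z)) :
    ∃ (i : Fin n) (k : ℕ), attn (z k) i = {i} ∧ v = z k i := by
  classical
  obtain ⟨φ, hφ, w, hw, Cs, hCs⟩ := exists_subseq hdyn hα hn
  have hKconv : Convex ℝ (limitK z) := convex_iInter fun k => convex_convexHull ℝ _
  -- limits of tokens lie in K
  have hwK : ∀ j, w j ∈ limitK z := by
    intro j
    rw [limitK, Set.mem_iInter]
    intro k
    have hclosed : IsClosed (convexHull ℝ (Set.range (z k))) :=
      ((Set.finite_range (z k)).isCompact_convexHull ℝ).isClosed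
    refine hclosed.mem_of_tendsto (hw j) ?_
    filter_upwards [Filter.eventually_ge_atTop k] with m hm
    exact token_mem_hull hdyn hα hn (le_trans hm (hφ.le_apply)) j
  -- v is a convex combination of limits, hence equals some w i₀
  have hvK : v ∈ limitK z := hv.1
  have hrepr : ∀ m : ℕ, ∃ a : Fin n → ℝ,
      (∀ i, 0 ≤ a i) ∧ (∑ i, a i) = 1 ∧ (∑ i, a i • z (φ m) i) = v := by
    intro m
    have hvm : v ∈ convexHull ℝ (Set.range (z (φ m))) := by
      rw [limitK, Set.mem_iInter] at hvK
      exact hvK (φ m)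
    exact exists_weights (inj_all hdyn hα hn hdist (φ m)) hvm
  choose a ha0 ha1 ha2 using hrepr
  -- extract convergent weights
  have hamem : ∀ m, a m ∈ closedBall (0 : Fin n → ℝ) 1 := by
    intro m
    rw [mem_closedBall, dist_pi_le_iff zero_le_one]
    intro i
    show dist (a m i) 0 ≤ 1
    rw [dist_zero_right, Real.norm_eq_abs, abs_of_nonneg (ha0 m i)]
    calc a m i ≤ ∑ j, a m j := Finset.single_le_sum (fun j _ => ha0 m j) (Finset.mem_univ i)
      _ = 1 := ha1 m
  obtain ⟨lam, -, ψ, hψ, hlamconv⟩ := tendsto_subseq_of_bounded isBounded_closedBall hamem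
  have hlam : ∀ i, Tendsto (fun m => a (ψ m) i) atTop (nhds (lam i)) :=
    fun i => (tendsto_pi_nhds.1 hlamconv) i
  have hlam0 : ∀ i, 0 ≤ lam i := fun i =>
    le_of_tendsto_of_tendsto' tendsto_const_nhds (hlam i) (fun m => ha0 (ψ m) i)
  have hlam1 : (∑ i, lam i) = 1 := by
    have h1 : Tendsto (fun m => ∑ i, a (ψ m) i) atTop (nhds (∑ i, lam i)) :=
      tendsto_finset_sum _ (fun i _ => hlam i)
    have h2 : Tendsto (fun m => ∑ i, a (ψ m) i) atTop (nhds 1) := by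
      refine tendsto_const_nhds.congr fun m => ?_
      rw [ha1 (ψ m)]
    exact tendsto_nhds_unique h1 h2
  have hlamv : (∑ i, lam i • w i) = v := by
    have h1 : Tendsto (fun m => ∑ i, a (ψ m) i • z (φ (ψ m)) i) atTop
        (nhds (∑ i, lam i • w i)) :=
      tendsto_finset_sum _ (fun i _ => (hlam i).smul ((hw i).comp hψ.tendsto_atTop))
    have h2 : Tendsto (fun m => ∑ i, a (ψ m) i • z (φ (ψ m)) i) atTop (nhds v) := by
      refine tendsto_const_nhds.congr fun m => ?_
      rw [ha2 (ψ m)]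
    exact tendsto_nhds_unique h1 h2
  have hcombo := extremePoint_of_combo hKconv hv Finset.univ lam w
    (fun i _ => hlam0 i) hlam1 (fun i _ => hwK i) hlamv
  have hex : ∃ i₀, w i₀ = v := by
    by_contra hno
    push_neg at hno
    have : ∀ i, lam i = 0 := by
      intro i
      by_contra hi
      exact hno i (hcombo i (Finset.mem_univ i) hi)
    rw [Finset.sum_congr rfl (fun i _ => this i)] at hlam1
    simp at hlam1
  obtain ⟨i₀, hi₀⟩ := hex
  -- the cluster of tokens whose limit is v
  set A : Finset (Fin n) := Finset.univ.filter (fun j => w j = v) with hA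
  have hi₀A : i₀ ∈ A := by rw [hA]; simp [hi₀]
  -- attention of cluster members stays in the cluster
  have hAattn : ∀ p ∈ A, ∀ j ∈ Cs p, w j = v := by
    intro p hpA j hj
    have hwp : w p = v := by
      rw [hA] at hpA; simpa using hpA
    have hCsne : (Cs p).Nonempty := by
      rw [← hCs 0 p]; exact attn_nonempty hn _ p
    have hcard : (0:ℝ) < ((Cs p).card : ℝ) := by
      exact_mod_cast Finset.card_pos.2 hCsne
    have h1 : Tendsto (fun m => bary (z (φ m)) p) atTop
        (nhds (((Cs p).card : ℝ)⁻¹ • ∑ j ∈ Cs p, w j)) := by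
      have hsum : Tendsto (fun m => ∑ j ∈ Cs p, z (φ m) j) atTop
          (nhds (∑ j ∈ Cs p, w j)) := tendsto_finset_sum _ (fun j _ => hw j)
      have := hsum.const_smul (((Cs p).card : ℝ)⁻¹)
      refine this.congr fun m => ?_
      rw [bary, hCs m p]
    have h2 : Tendsto (fun m => bary (z (φ m)) p - z (φ m) p) atTop (nhds 0) :=
      (steps_tendsto_zero hdyn hα hn p).comp hφ.tendsto_atTop
    have h3 : Tendsto (fun m => z (φ m) p) atTop
        (nhds ((((Cs p).card : ℝ)⁻¹ • ∑ j ∈ Cs p, w j) - 0)) := by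
      have := h1.sub h2
      refine this.congr fun m => ?_
      abel
    rw [sub_zero] at h3
    have hvcomb : (((Cs p).card : ℝ)⁻¹ • ∑ j ∈ Cs p, w j) = v := by
      have := tendsto_nhds_unique h3 (hw p)
      rw [this, hwp]
    have hvsum : (∑ j ∈ Cs p, (((Cs p).card : ℝ)⁻¹) • w j) = v := by
      rw [← Finset.smul_sum]; exact hvcomb
    exact extremePoint_of_combo hKconv hv (Cs p) (fun _ => ((Cs p).card : ℝ)⁻¹) w
      (fun _ _ => le_of_lt (inv_pos.2 hcard))
      (by rw [Finset.sum_const, nsmul_eq_mul, mul_inv_cancel₀ (ne_of_gt hcard)])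
      (fun j _ => hwK j) hvsum j hj (ne_of_gt (inv_pos.2 hcard))
  -- pick the token of maximal norm in the cluster at time φ 0
  obtain ⟨q, hqA, hqmax⟩ := A.exists_max_image (fun j => ‖z (φ 0) j‖) ⟨i₀, hi₀A⟩
  have hwq : w q = v := by rw [hA] at hqA; simpa using hqA
  set k0 := φ 0 with hk0
  have hqnorm : 0 < ‖z k0 q‖ :=
    lt_of_lt_of_le (norm_pos_iff.2 (hnz q)) (norm_mono hdyn hα hn (Nat.zero_le k0) q)
  have hq_leader : attn (z k0) q = {q} := by
    have hCsq : attn (z k0) q = Cs q := hCs 0 q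
    have huniq : ∀ j ∈ Cs q, j = q := by
      intro j hj
      have hjA : j ∈ A := by
        rw [hA]; simp [hAattn q hqA j hj]
      have hjattn : j ∈ attn (z k0) q := by rw [hCsq]; exact hj
      have hsup : ⟪z k0 q, z k0 j⟫ = ⨆ ℓ, ⟪z k0 q, z k0 ℓ⟫ := mem_attn_iff.1 hjattn
      have hself : ‖z k0 q‖^2 ≤ ⟪z k0 q, z k0 j⟫ := by
        rw [hsup, ← real_inner_self_eq_norm_sq]
        exact inner_le_iSup (z k0) q q
      have hcs : ⟪z k0 q, z k0 j⟫ ≤ ‖z k0 q‖ * ‖z k0 j‖ := real_inner_le_norm _ _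
      have hjle : ‖z k0 j‖ ≤ ‖z k0 q‖ := hqmax j hjA
      have hnormeq : ‖z k0 j‖ = ‖z k0 q‖ := by nlinarith
      have hinner_eq : ⟪z k0 q, z k0 j⟫ = ‖z k0 q‖ * ‖z k0 j‖ := by nlinarith
      have := inner_eq_norm_mul_iff_real.1 hinner_eq
      rw [hnormeq] at this
      have hzeq : z k0 q = z k0 j := smul_right_injective _ (ne_of_gt hqnorm) this
      exact (inj_all hdyn hα hn hdist k0 hzeq.symm)
    obtain ⟨j₀, hj₀⟩ := (show (Cs q).Nonempty by rw [← hCsq]; exact attn_nonempty hn _ q)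
    have hqmem : q ∈ Cs q := by
      have hqe := huniq j₀ hj₀
      rw [hqe] at hj₀
      exact hj₀
    rw [hCsq]
    ext j
    simp only [Finset.mem_singleton]
    exact ⟨fun hj => huniq j hj, fun hj => hj ▸ hqmem⟩
  -- the leader is frozen, so its value equals the limit v
  have hfr := freeze hdyn hα hn hq_leader
  have hconst : Tendsto (fun m => z (φ m) q) atTop (nhds (z k0 q)) := by
    refine tendsto_const_nhds.congr fun m => ?_
    have hge : k0 ≤ φ m := hφ.monotone (Nat.zero_le m)
    have := (hfr (φ m - k0)).1
    rw [Nat.add_sub_cancel' hge] at this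
    exact this.symm
  have : w q = z k0 q := tendsto_nhds_unique (hw q) hconst
  exact ⟨q, k0, hq_leader, by rw [← hwq, this]⟩

end
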